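/- Let K ≥ 2 and let Θ_{R0}⁽¹⁾,…,Θ_{R0}⁽ᴷ⁾ be symmetric positive definite p×p real matrices with 1/L ≤ Λ_min(Θ_{R0}⁽ᵏ⁾) ≤ Λ_max(Θ_{R0}⁽ᵏ⁾) ≤ L for some L ≥ 1, set c = 1/(8L²), R₀⁽ᵏ⁾ = (Θ_{R0}⁽ᵏ⁾)⁻¹, and let s_k be the number of pairs (i,j) with i ≠ j and (Θ_{R0}⁽ᵏ⁾)_{ij} ≠ 0. Let R̂⁽¹⁾,…,R̂⁽ᴷ⁾ be symmetric p×p matrices such that R̂⁽ᵏ⁾ and R₀⁽ᵏ⁾ all have unit diagonal, and max_k ‖R̂⁽ᵏ⁾ − R₀⁽ᵏ⁾‖_∞ ≤ λ₀ for some λ₀ > 0. Suppose 2(K(K−1)ρ/2 + λ₀) ≤ λ ≤ c/(8L) with ρ ≥ 0, and 8λ² Σ_k s_k / c + 2Kpλ₀²/c ≤ λ₀/(2L). If (Θ̂_R⁽¹⁾,…,Θ̂_R⁽ᴷ⁾) minimizes F(Θ₁,…,Θ_K) = Σ_{k=1}^K [tr(R̂⁽ᵏ⁾Θ_k) − log det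 Θ_k] + λ Σ_{k=1}^K ‖Θ_k⁻‖₁ + ρ Σ_{k<k'} ‖Θ_k⁻ − Θ_{k'}⁻‖₁ over K-tuples of symmetric positive definite matrices, then c Σ_{k=1}^K ‖Θ̂_R⁽ᵏ⁾ − Θ_{R0}⁽ᵏ⁾‖_F² + λ Σ_{k=1}^K ‖(Θ̂_R⁽ᵏ⁾ − Θ_{R0}⁽ᵏ⁾)⁻‖₁ ≤ 8λ² Σ_{k=1}^K s_k / c. -/

import Mathlib

open Matrix
open scoped BigOperators Classical

noncomputable section

/-- Frobenius norm squared: `‖A‖_F² = Σ_{i,j} A_{ij}²`. -/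
def frobSq {p : ℕ} (A : Matrix (Fin p) (Fin p) ℝ) : ℝ := ∑ i, ∑ j, (A i j) ^ 2

/-- Frobenius norm `‖A‖_F = (Σ_{i,j} A_{ij}²)^{1/2}`. -/
def frobNorm {p : ℕ} (A : Matrix (Fin p) (Fin p) ℝ) : ℝ := Real.sqrt (frobSq A)

/-- Entrywise ℓ₁ norm `‖A‖₁ = Σ_{i,j} |A_{ij}|`. -/
def l1Norm {p : ℕ} (A : Matrix (Fin p) (Fin p) ℝ) : ℝ := ∑ i, ∑ j, |A i j|

/-- Entrywise supremum norm `‖A‖_∞ = max_{i,j} |A_{ij}|`. -/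
def supNorm {p : ℕ} (A : Matrix (Fin p) (Fin p) ℝ) : ℝ := ⨆ i, ⨆ j, |A i j|

/-- ℓ₁-operator norm `|||A|||₁ = max_j Σ_i |A_{ij}|`. -/
def opNorm1 {p : ℕ} (A : Matrix (Fin p) (Fin p) ℝ) : ℝ := ⨆ j, ∑ i, |A i j|

/-- `A⁺`: the diagonal matrix with the same diagonal as `A`. -/
def diagPart {p : ℕ} (A : Matrix (Fin p) (Fin p) ℝ) : Matrix (Fin p) (Fin p) ℝ :=
  Matrix.diagonal (fun i => A i i)

/-- `A⁻ = A − A⁺`: the off-diagonal part of `A`. -/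
def offDiagPart {p : ℕ} (A : Matrix (Fin p) (Fin p) ℝ) : Matrix (Fin p) (Fin p) ℝ :=
  A - diagPart A

/-- Number of off-diagonal nonzero entries of `A`:
`s = #{(i,j) : i ≠ j, A_{ij} ≠ 0}`. -/
def sparsity {p : ℕ} (A : Matrix (Fin p) (Fin p) ℝ) : ℕ :=
  (Finset.univ.filter (fun ij : Fin p × Fin p => ij.1 ≠ ij.2 ∧ A ij.1 ij.2 ≠ 0)).card

/-- Fused graphical lasso objective for `K` groups:
`F(Θ₁,…,Θ_K) = Σ_k [tr(Σ̂⁽ᵏ⁾Θ_k) − log det Θ_k] + λ Σ_k ‖Θ_k⁻‖₁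
  + ρ Σ_{k<k'} ‖Θ_k⁻ − Θ_{k'}⁻‖₁`. -/
def objFGL {p K : ℕ} (S : Fin K → Matrix (Fin p) (Fin p) ℝ) (lam rho : ℝ)
    (Θ : Fin K → Matrix (Fin p) (Fin p) ℝ) : ℝ :=
  ∑ k, (Matrix.trace (S k * Θ k) - Real.log (Θ k).det)
    + lam * ∑ k, l1Norm (offDiagPart (Θ k))
    + rho * ∑ k, ∑ k', if k < k' then l1Norm (offDiagPart (Θ k) - offDiagPart (Θ k')) else 0

lemma posdef_conj {n : ℕ} {A : Matrix (Fin n) (Fin n) ℝ} (B : Matrix (Fin n) (Fin n) ℝ)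
    (hA : A.PosDef) (hB : IsUnit B) : (Bᴴ * A * B).PosDef := by
  exact hA.conjTranspose_mul_mul_same (Matrix.mulVec_injective_of_isUnit hB)

lemma frobSq_eq_trace {n : ℕ} (X : Matrix (Fin n) (Fin n) ℝ) :
    frobSq X = Matrix.trace (Xᴴ * X) := by
  simp only [frobSq, Matrix.trace, Matrix.diag, Matrix.mul_apply, Matrix.conjTranspose_apply,
    star_trivial]
  rw [Finset.sum_comm]
  simp [pow_two]


lemma key_sum_aux {n : ℕ} {L : ℝ} (hL : 1 ≤ L) {d : Fin n → ℝ} (hd0 : ∀ i, 0 < d i)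
    (heig : ∀ i, 1/L ≤ d i ∧ d i ≤ L)
    {Δ Δ' U M V : Matrix (Fin n) (Fin n) ℝ} {f μ : Fin n → ℝ}
    (hΔ : Δ.IsHermitian) (hΔ'h : Δ'.IsHermitian) (hMh : M.IsHermitian)
    (hMspec : M = V * diagonal μ * Vᴴ) (hVV : Vᴴ * V = 1) (hVV' : V * Vᴴ = 1)
    (hUU' : U * Uᴴ = 1) (hΔ'def : Δ' = Uᴴ * Δ * U) (hM : M = diagonal f * Δ' * diagonal f)
    (hf : f = fun i => (Real.sqrt (d i))⁻¹) :
    frobSq Δ / L^2 ≤ ∑ i, (μ i)^2 ∧ (∑ i, (μ i)^2) ≤ L^2 * frobSq Δ := by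
  have hL0 : (0:ℝ) < L := lt_of_lt_of_le one_pos hL
  have hLne : L ≠ 0 := ne_of_gt hL0
  have hMM : M * M = V * diagonal (fun i => μ i * μ i) * Vᴴ := by
    rw [hMspec]
    calc (V * diagonal μ * Vᴴ) * (V * diagonal μ * Vᴴ)
        = V * (diagonal μ * ((Vᴴ * V) * (diagonal μ * Vᴴ))) := by simp only [Matrix.mul_assoc]
      _ = V * (diagonal μ * diagonal μ) * Vᴴ := by
          rw [hVV, Matrix.one_mul]; simp only [Matrix.mul_assoc]
      _ = V * diagonal (fun i => μ i * μ i) * Vᴴ := by rw [Matrix.diagonal_mul_diagonal]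
  have htr1 : Matrix.trace (M * M) = ∑ i, (μ i)^2 := by
    rw [hMM, Matrix.trace_mul_cycle, hVV, Matrix.one_mul, Matrix.trace_diagonal]
    simp [pow_two]
  have hsymm : ∀ i j, M j i = M i j := by
    intro i j
    conv_lhs => rw [← hMh]
    simp [Matrix.conjTranspose_apply]
  have htr2 : Matrix.trace (M * M) = ∑ i, ∑ j, (M i j)^2 := by
    simp only [Matrix.trace, Matrix.diag, Matrix.mul_apply, pow_two]
    exact Finset.sum_congr rfl fun i _ => Finset.sum_congr rfl fun j _ => by rw [hsymm i j]
  have hsq : ∀ i, ((Real.sqrt (d i))⁻¹)^2 = (d i)⁻¹ := by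
    intro i
    rw [← Real.sqrt_inv]
    exact Real.sq_sqrt (inv_nonneg.mpr (hd0 i).le)
  have hMij : ∀ i j, (M i j)^2 = (Δ' i j)^2 * ((d i)⁻¹ * (d j)⁻¹) := by
    intro i j
    have hent : M i j = f i * Δ' i j * f j := by
      rw [hM, Matrix.mul_diagonal, Matrix.diagonal_mul]
    have : (M i j)^2 = (Δ' i j)^2 * ((f i)^2 * (f j)^2) := by rw [hent]; ring
    rw [this, hf]
    rw [hsq i, hsq j]
  have hfrob' : (∑ i, ∑ j, (Δ' i j)^2) = frobSq Δ := by
    have h1 : frobSq Δ' = frobSq Δ := by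
      rw [frobSq_eq_trace, frobSq_eq_trace, hΔ'h.eq, hΔ.eq, hΔ'def]
      calc Matrix.trace ((Uᴴ*Δ*U) * (Uᴴ*Δ*U))
          = Matrix.trace (Uᴴ * (Δ * ((U * Uᴴ) * (Δ * U)))) := by simp only [Matrix.mul_assoc]
        _ = Matrix.trace (Uᴴ * (Δ * (Δ * U))) := by rw [hUU', Matrix.one_mul]
        _ = Matrix.trace ((Δ * (Δ * U)) * Uᴴ) := by rw [Matrix.trace_mul_comm]
        _ = Matrix.trace ((Δ * Δ) * (U * Uᴴ)) := by simp only [Matrix.mul_assoc]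
        _ = Matrix.trace (Δ * Δ) := by rw [hUU', Matrix.mul_one]
    exact h1
  have hinv : ∀ i, 1/L ≤ (d i)⁻¹ ∧ (d i)⁻¹ ≤ L := by
    intro i
    constructor
    · rw [one_div]
      exact inv_anti₀ (hd0 i) (heig i).2
    · have h2 : (d i)⁻¹ ≤ (1/L)⁻¹ := inv_anti₀ (by positivity) (heig i).1
      rwa [one_div, inv_inv] at h2
  have hμsum : ∑ i, (μ i)^2 = ∑ i, ∑ j, (Δ' i j)^2 * ((d i)⁻¹ * (d j)⁻¹) := by
    rw [← htr1, htr2]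
    exact Finset.sum_congr rfl fun i _ => Finset.sum_congr rfl fun j _ => hMij i j
  constructor
  · rw [hμsum, ← hfrob']
    have expand : (∑ i, ∑ j, (Δ' i j)^2) / L^2 = ∑ i, ∑ j, (Δ' i j)^2 * (1/L * (1/L)) := by
      rw [Finset.sum_div]
      refine Finset.sum_congr rfl fun i _ => ?_
      rw [Finset.sum_div]
      refine Finset.sum_congr rfl fun j _ => ?_
      rw [div_eq_mul_inv]
      congr 1
      rw [one_div, ← mul_inv, ← pow_two]
    rw [expand]
    refine Finset.sum_le_sum fun i _ => Finset.sum_le_sum fun j _ => ?_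
    have h3 : (1:ℝ)/L * (1/L) ≤ (d i)⁻¹ * (d j)⁻¹ := by
      have := (hinv i).1; have := (hinv j).1
      have h4 : (0:ℝ) < 1/L := by positivity
      nlinarith
    exact mul_le_mul_of_nonneg_left h3 (sq_nonneg _)
  · rw [hμsum, ← hfrob', Finset.mul_sum]
    refine Finset.sum_le_sum fun i _ => ?_
    rw [Finset.mul_sum]
    refine Finset.sum_le_sum fun j _ => ?_
    have h3 : (d i)⁻¹ * (d j)⁻¹ ≤ L * L := by
      have h5 := (hinv i).2; have h6 := (hinv j).2
      have h7 : (0:ℝ) < (d i)⁻¹ := by have := hd0 i; positivity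
      nlinarith
    calc (Δ' i j)^2 * ((d i)⁻¹ * (d j)⁻¹) ≤ (Δ' i j)^2 * (L * L) :=
          mul_le_mul_of_nonneg_left h3 (sq_nonneg _)
      _ = L^2 * (Δ' i j)^2 := by ring

set_option maxHeartbeats 1000000 in
lemma key_lemma {n : ℕ} {A Δ : Matrix (Fin n) (Fin n) ℝ} {L : ℝ} (hL : 1 ≤ L)
    (hA : A.PosDef) (heig : ∀ i, 1/L ≤ hA.1.eigenvalues i ∧ hA.1.eigenvalues i ≤ L)
    (hΔ : Δ.IsHermitian) :
    ∃ μ : Fin n → ℝ,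
      (∀ t : ℝ, (A + t • Δ).det = A.det * ∏ i, (1 + t * μ i)) ∧
      Matrix.trace (A⁻¹ * Δ) = ∑ i, μ i ∧
      frobSq Δ / L^2 ≤ ∑ i, (μ i)^2 ∧ (∑ i, (μ i)^2) ≤ L^2 * frobSq Δ ∧
      ((A + Δ).PosDef → ∀ i, -1 < μ i) := by
  have hL0 : (0:ℝ) < L := lt_of_lt_of_le one_pos hL
  set U : Matrix (Fin n) (Fin n) ℝ := (hA.1.eigenvectorUnitary : Matrix (Fin n) (Fin n) ℝ) with hU
  set d : Fin n → ℝ := hA.1.eigenvalues with hdd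
  have hd0 : ∀ i, 0 < d i := fun i => lt_of_lt_of_le (by positivity) (heig i).1
  have hUU : Uᴴ * U = 1 := hA.1.eigenvectorUnitary.2.1
  have hUU' : U * Uᴴ = 1 := hA.1.eigenvectorUnitary.2.2
  have hspec : A = U * diagonal d * Uᴴ := by
    have := hA.1.spectral_theorem
    simpa [Matrix.star_eq_conjTranspose] using this
  set Δ' : Matrix (Fin n) (Fin n) ℝ := Uᴴ * Δ * U with hΔ'
  set f : Fin n → ℝ := fun i => (Real.sqrt (d i))⁻¹ with hf
  set e : Fin n → ℝ := fun i => Real.sqrt (d i) with he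
  have hef : ∀ i, e i * f i = 1 := fun i => mul_inv_cancel₀ (ne_of_gt (Real.sqrt_pos.mpr (hd0 i)))
  have hee : ∀ i, e i * e i = d i := fun i => Real.mul_self_sqrt (hd0 i).le
  set M : Matrix (Fin n) (Fin n) ℝ := diagonal f * Δ' * diagonal f with hM
  have hΔ'h : Δ'.IsHermitian := Matrix.isHermitian_conjTranspose_mul_mul U hΔ
  have hdiagCT : ∀ g : Fin n → ℝ, (diagonal g)ᴴ = diagonal g := by
    intro g
    rw [Matrix.diagonal_conjTranspose]
    congr 1
  have hMh : M.IsHermitian := by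
    have h1 : Mᴴ = M := by
      rw [hM, Matrix.conjTranspose_mul, Matrix.conjTranspose_mul, hdiagCT, hΔ'h.eq]
      simp only [Matrix.mul_assoc]
    exact h1
  set V : Matrix (Fin n) (Fin n) ℝ := (hMh.eigenvectorUnitary : Matrix (Fin n) (Fin n) ℝ)
    with hV
  set μ : Fin n → ℝ := hMh.eigenvalues with hμ
  have hVV : Vᴴ * V = 1 := hMh.eigenvectorUnitary.2.1
  have hVV' : V * Vᴴ = 1 := hMh.eigenvectorUnitary.2.2
  have hMspec : M = V * diagonal μ * Vᴴ := by
    have := hMh.spectral_theorem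
    simpa [Matrix.star_eq_conjTranspose] using this
  set Z : Matrix (Fin n) (Fin n) ℝ := U * diagonal e * V with hZ
  have hZH : Zᴴ = Vᴴ * (diagonal e * Uᴴ) := by
    rw [hZ, Matrix.conjTranspose_mul, Matrix.conjTranspose_mul, hdiagCT]
  -- main conjugation identity
  have hkey : ∀ t : ℝ, A + t • Δ = Z * diagonal (fun i => 1 + t * μ i) * Zᴴ := by
    intro t
    have h2 : diagonal (fun i => 1 + t * μ i) = 1 + t • diagonal μ := by
      rw [← Matrix.diagonal_one, ← Matrix.diagonal_smul, ← Matrix.diagonal_add]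
      congr 1
    rw [h2, hZH, hZ]
    have expand : (U * diagonal e * V) * (1 + t • diagonal μ) * (Vᴴ * (diagonal e * Uᴴ))
        = (U * diagonal e) * (V * Vᴴ) * (diagonal e * Uᴴ)
          + t • ((U * diagonal e) * (V * diagonal μ * Vᴴ) * (diagonal e * Uᴴ)) := by
      rw [Matrix.mul_add, Matrix.add_mul, Matrix.mul_one]
      congr 1
      · simp only [Matrix.mul_assoc]
      · rw [Matrix.mul_smul, Matrix.smul_mul]
        congr 1
        simp only [Matrix.mul_assoc]
    rw [expand, hVV', ← hMspec, Matrix.mul_one]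
    congr 1
    · -- A = U * diagonal e * (diagonal e * Uᴴ)
      rw [hspec]
      rw [Matrix.mul_assoc, Matrix.mul_assoc, ← Matrix.mul_assoc (diagonal e),
        Matrix.diagonal_mul_diagonal]
      rw [show (fun i => e i * e i) = d from funext hee]
    · -- t • Δ = t • (U * diag e * M * (diag e * Uᴴ))
      congr 1
      rw [hM]
      symm
      calc U * diagonal e * (diagonal f * Δ' * diagonal f) * (diagonal e * Uᴴ)
          = U * (diagonal e * diagonal f) * Δ' * ((diagonal f * diagonal e) * Uᴴ) := by
            simp only [Matrix.mul_assoc]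
        _ = U * Δ' * Uᴴ := by
            rw [Matrix.diagonal_mul_diagonal, Matrix.diagonal_mul_diagonal]
            have h3 : (fun i => e i * f i) = fun _ => (1:ℝ) := funext fun i => hef i
            have h4 : (fun i => f i * e i) = fun _ => (1:ℝ) := funext fun i => by
              rw [mul_comm]; exact hef i
            rw [h3, h4, Matrix.diagonal_one, Matrix.mul_one, Matrix.one_mul]
        _ = Δ := by
            rw [hΔ']
            calc U * (Uᴴ * Δ * U) * Uᴴ = (U * Uᴴ) * Δ * (U * Uᴴ) := by
                  simp only [Matrix.mul_assoc]
              _ = Δ := by rw [hUU', Matrix.one_mul, Matrix.mul_one]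
  have hZZH : Z * Zᴴ = A := by
    have := hkey 0
    simpa using this.symm
  have hdetZ : Z.det * Zᴴ.det = A.det := by
    rw [← Matrix.det_mul, hZZH]
  have hdetA : 0 < A.det := hA.det_pos
  have hZdet : IsUnit Z.det := by
    have h0 : Z.det ≠ 0 := by
      intro h
      rw [h, zero_mul] at hdetZ
      exact hdetA.ne' hdetZ.symm
    exact h0.isUnit
  have hZHdet : IsUnit Zᴴ.det := by
    have h0 : Zᴴ.det ≠ 0 := by
      intro h
      rw [h, mul_zero] at hdetZ
      exact hdetA.ne' hdetZ.symm
    exact h0.isUnit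
  refine ⟨μ, ?_, ?_, ?_, ?_, ?_⟩
  · -- determinant identity
    intro t
    rw [hkey t, Matrix.det_mul, Matrix.det_mul, Matrix.det_diagonal, ← hdetZ]
    ring
  · -- trace identity
    have hΔZ : Δ = Z * diagonal μ * Zᴴ := by
      have e1 := hkey 1
      have e0 := hkey 0
      simp only [one_smul, zero_smul, add_zero, one_mul, zero_mul] at e1 e0
      have : Δ = (A + Δ) - A := by abel
      rw [this, e1, e0, ← Matrix.sub_mul, ← Matrix.mul_sub]
      have hdsub : diagonal (fun i => 1 + μ i) - diagonal (fun i => (1:ℝ)) = diagonal μ := by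
        rw [Matrix.diagonal_sub]
        congr 1
        funext i
        ring
      rw [hdsub]
    rw [← hZZH, Matrix.mul_inv_rev, hΔZ]
    have hmul : Zᴴ⁻¹ * Z⁻¹ * (Z * diagonal μ * Zᴴ) = Zᴴ⁻¹ * (diagonal μ * Zᴴ) := by
      calc Zᴴ⁻¹ * Z⁻¹ * (Z * diagonal μ * Zᴴ)
          = Zᴴ⁻¹ * ((Z⁻¹ * Z) * (diagonal μ * Zᴴ)) := by simp only [Matrix.mul_assoc]
        _ = Zᴴ⁻¹ * (diagonal μ * Zᴴ) := by
            rw [Matrix.nonsing_inv_mul _ hZdet, Matrix.one_mul]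
    rw [hmul, Matrix.trace_mul_comm, Matrix.mul_assoc, Matrix.mul_nonsing_inv _ hZHdet,
      Matrix.mul_one, Matrix.trace_diagonal]
  · -- lower bound on ∑ μ²
    exact (key_sum_aux hL hd0 heig hΔ hΔ'h hMh hMspec hVV hVV' hUU' hΔ' hM hf).1
  · exact (key_sum_aux hL hd0 heig hΔ hΔ'h hMh hMspec hVV hVV' hUU' hΔ' hM hf).2
  · -- positivity of 1 + μ
    intro hAD i
    have h1 : A + Δ = Z * diagonal (fun i => 1 + μ i) * Zᴴ := by
      have := hkey 1
      simpa only [one_smul, one_mul] using this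
    have hBdet : IsUnit ((Zᴴ)⁻¹).det := by
      rw [Matrix.det_nonsing_inv]
      simp only [Ring.inverse_eq_inv']
      exact isUnit_iff_ne_zero.mpr (inv_ne_zero hZHdet.ne_zero)
    have hBU : IsUnit ((Zᴴ)⁻¹) := (Matrix.isUnit_iff_isUnit_det _).mpr hBdet
    have hpd := posdef_conj ((Zᴴ)⁻¹) hAD hBU
    have hBH : ((Zᴴ)⁻¹)ᴴ = Z⁻¹ := by
      rw [Matrix.conjTranspose_nonsing_inv, Matrix.conjTranspose_conjTranspose]
    rw [hBH, h1] at hpd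
    have hred : Z⁻¹ * (Z * diagonal (fun i => 1 + μ i) * Zᴴ) * (Zᴴ)⁻¹
        = diagonal (fun i => 1 + μ i) := by
      calc Z⁻¹ * (Z * diagonal (fun i => 1 + μ i) * Zᴴ) * (Zᴴ)⁻¹
          = (Z⁻¹ * Z) * (diagonal (fun i => 1 + μ i) * (Zᴴ * (Zᴴ)⁻¹)) := by
            simp only [Matrix.mul_assoc]
        _ = diagonal (fun i => 1 + μ i) := by
            rw [Matrix.nonsing_inv_mul _ hZdet, Matrix.mul_nonsing_inv _ hZHdet,
              Matrix.one_mul, Matrix.mul_one]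
    rw [hred] at hpd
    have := (Matrix.posDef_diagonal_iff.mp hpd) i
    linarith


lemma log_quad {x : ℝ} (h : |x| ≤ 1/4) : Real.log (1+x) ≤ x - x^2/8 := by
  have h1 : |(-x)| < 1 := by rw [abs_neg]; linarith [abs_nonneg x]
  have h2 := Real.abs_log_sub_add_sum_range_le h1 2
  rw [abs_neg] at h2
  rw [show (1:ℝ) - -x = 1 + x from by ring] at h2
  simp only [Finset.sum_range_succ, Finset.sum_range_zero] at h2
  have hden : (0:ℝ) < 1 - |x| := by linarith [abs_nonneg x]
  have h5 : |x|^(2+1)/(1-|x|) ≤ x^2/3 := by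
    rw [div_le_iff₀ hden]
    nlinarith [abs_nonneg x, sq_abs x, sq_nonneg x]
  have h6 := (abs_le.mp h2).2
  norm_num at h6
  ring_nf at h5 h6 ⊢
  nlinarith [sq_nonneg x, h5, h6]

lemma log_concave_seg {x t : ℝ} (hx : -1 < x) (ht0 : 0 ≤ t) (ht1 : t ≤ 1) :
    t * Real.log (1+x) ≤ Real.log (1+t*x) := by
  have hc := strictConcaveOn_log_Ioi.concaveOn
  have h2 := hc.2 (Set.mem_Ioi.mpr one_pos) (Set.mem_Ioi.mpr (by linarith : (0:ℝ) < 1+x))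
    (by linarith : (0:ℝ) ≤ 1-t) ht0 (by ring)
  simp only [smul_eq_mul, Real.log_one, mul_one, mul_zero] at h2
  rw [show (1:ℝ) - t + t*(1+x) = 1 + t*x from by ring] at h2
  linarith

lemma abs_le_supNorm {p : ℕ} (A : Matrix (Fin p) (Fin p) ℝ) (i j : Fin p) :
    |A i j| ≤ supNorm A := by
  have h1 : |A i j| ≤ ⨆ j', |A i j'| :=
    le_ciSup (f := fun j' => |A i j'|) (Set.Finite.bddAbove (Set.finite_range _)) j
  exact h1.trans (le_ciSup (f := fun i' => ⨆ j', |A i' j'|)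
    (Set.Finite.bddAbove (Set.finite_range _)) i)

lemma pair_sum {K : ℕ} (hK : 1 ≤ K) (a : Fin K → ℝ) :
    ∑ k, ∑ k', (if k < k' then a k + a k' else 0) = ((K:ℝ) - 1) * ∑ k, a k := by
  have hsplit : ∀ k k' : Fin K, (if k < k' then a k + a k' else 0)
      = (if k < k' then a k else 0) + (if k < k' then a k' else 0) := by
    intro k k'; split <;> simp
  simp_rw [hsplit, Finset.sum_add_distrib]
  have hcount : ∀ b : ℝ, ∀ j : Fin K, ∑ k' : Fin K, (if j < k' then b else 0)
      = ((Finset.univ.filter (fun k' => j < k')).card : ℝ) * b := by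
    intro b j
    rw [← Finset.sum_filter]
    simp [Finset.sum_const, mul_comm]
  have hcount2 : ∀ b : ℝ, ∀ j : Fin K, ∑ k : Fin K, (if k < j then b else 0)
      = ((Finset.univ.filter (fun k => k < j)).card : ℝ) * b := by
    intro b j
    rw [← Finset.sum_filter]
    simp [Finset.sum_const, mul_comm]
  have hcards : ∀ j : Fin K, ((Finset.univ.filter (fun k' => j < k')).card : ℝ)
      + ((Finset.univ.filter (fun k => k < j)).card : ℝ) = (K:ℝ) - 1 := by
    intro j
    have hdisj : Disjoint (Finset.univ.filter (fun k' => j < k'))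
        (Finset.univ.filter (fun k => k < j)) := by
      rw [Finset.disjoint_filter]
      intro x _ hx1
      exact not_lt_of_gt hx1
    have hunion : (Finset.univ.filter (fun k' => j < k')) ∪
        (Finset.univ.filter (fun k => k < j)) = Finset.univ.erase j := by
      ext x
      simp only [Finset.mem_union, Finset.mem_filter, Finset.mem_univ, true_and,
        Finset.mem_erase]
      constructor
      · rintro (h | h) <;> exact ⟨by omega, trivial⟩
      · rintro ⟨h, -⟩
        rcases lt_or_gt_of_ne h with h' | h'
        · right; exact h'
        · left; exact h'
    have hcard := Finset.card_union_of_disjoint hdisj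
    rw [hunion, Finset.card_erase_of_mem (Finset.mem_univ j), Finset.card_univ,
      Fintype.card_fin] at hcard
    have hc2 : ((K - 1 : ℕ) : ℝ) = (K:ℝ) - 1 := by
      rw [Nat.cast_sub hK]; norm_num
    rw [← hc2, hcard]
    push_cast
    ring
  -- second double sum: swap order
  rw [Finset.sum_comm (f := fun k k' => if k < k' then a k' else 0)]
  have e1 : ∀ j : Fin K, ∑ k' : Fin K, (if j < k' then a j else 0)
      = ((Finset.univ.filter (fun k' => j < k')).card : ℝ) * a j := fun j => hcount (a j) j
  have e2 : ∀ j : Fin K, ∑ k : Fin K, (if k < j then a j else 0)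
      = ((Finset.univ.filter (fun k => k < j)).card : ℝ) * a j := fun j => hcount2 (a j) j
  calc (∑ j, ∑ k', if j < k' then a j else 0) + (∑ j, ∑ k, if k < j then a j else 0)
      = ∑ j, (((Finset.univ.filter (fun k' => j < k')).card : ℝ) * a j
          + ((Finset.univ.filter (fun k => k < j)).card : ℝ) * a j) := by
        rw [← Finset.sum_add_distrib]
        exact Finset.sum_congr rfl fun j _ => by rw [e1 j, e2 j]
    _ = ∑ j, ((K:ℝ) - 1) * a j := Finset.sum_congr rfl fun j _ => by
        rw [← add_mul, hcards j]
    _ = ((K:ℝ) - 1) * ∑ k, a k := by rw [Finset.mul_sum]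

lemma offDiag_apply {p : ℕ} (A : Matrix (Fin p) (Fin p) ℝ) (i j : Fin p) :
    offDiagPart A i j = if i = j then 0 else A i j := by
  by_cases h : i = j
  · subst h; simp [offDiagPart, diagPart, Matrix.sub_apply, Matrix.diagonal_apply]
  · simp [offDiagPart, diagPart, Matrix.sub_apply, Matrix.diagonal_apply, h]

lemma offDiagPart_sub {p : ℕ} (A B : Matrix (Fin p) (Fin p) ℝ) :
    offDiagPart A - offDiagPart B = offDiagPart (A - B) := by
  ext i j
  simp only [Matrix.sub_apply, offDiag_apply]
  split <;> simp

lemma l1off_eq {p : ℕ} (A : Matrix (Fin p) (Fin p) ℝ) :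
    l1Norm (offDiagPart A)
      = ∑ ij ∈ Finset.univ.filter (fun ij : Fin p × Fin p => ij.1 ≠ ij.2), |A ij.1 ij.2| := by
  rw [Finset.sum_filter]
  rw [Fintype.sum_prod_type (f := fun ij : Fin p × Fin p => if ij.1 ≠ ij.2 then |A ij.1 ij.2| else 0)]
  unfold l1Norm
  refine Finset.sum_congr rfl fun i _ => Finset.sum_congr rfl fun j _ => ?_
  rw [offDiag_apply]
  by_cases h : i = j <;> simp [h]

set_option maxHeartbeats 2000000 in
/-- Oracle inequality (Frobenius/ℓ₁ part) for the `K`-group fused graphical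
lasso estimator based on correlation-type matrices with unit diagonals; here
`c = 1/(8L²)` and `R₀⁽ᵏ⁾ = (Θ_{R0}⁽ᵏ⁾)⁻¹`. -/
theorem oracle_inequality_FGL_multi_correlation
    (p K : ℕ) (hK : 2 ≤ K) (L lam rho lam0 : ℝ) (hL : 1 ≤ L)
    (ΘR0 Rhat ΘhatR : Fin K → Matrix (Fin p) (Fin p) ℝ)
    (hΘR0 : ∀ k, (ΘR0 k).PosDef)
    (heig : ∀ k i, 1 / L ≤ (hΘR0 k).1.eigenvalues i ∧ (hΘR0 k).1.eigenvalues i ≤ L)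
    (hRsymm : ∀ k, (Rhat k).IsSymm)
    (hRdiag : ∀ k i, Rhat k i i = 1)
    (hR0diag : ∀ k i, (ΘR0 k)⁻¹ i i = 1)
    (hlam0 : 0 < lam0)
    (hclose : ∀ k, supNorm (Rhat k - (ΘR0 k)⁻¹) ≤ lam0)
    (hrho : 0 ≤ rho)
    (hlam_low : 2 * ((K : ℝ) * ((K : ℝ) - 1) / 2 * rho + lam0) ≤ lam)
    (hlam_high : lam ≤ (1 / (8 * L ^ 2)) / (8 * L))
    (hsparse : 8 * lam ^ 2 * (∑ k, (sparsity (ΘR0 k) : ℝ)) / (1 / (8 * L ^ 2))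
        + 2 * (K : ℝ) * (p : ℝ) * lam0 ^ 2 / (1 / (8 * L ^ 2)) ≤ lam0 / (2 * L))
    (hΘhatR : ∀ k, (ΘhatR k).PosDef)
    (hmin : ∀ Θ : Fin K → Matrix (Fin p) (Fin p) ℝ, (∀ k, (Θ k).PosDef) →
        objFGL Rhat lam rho ΘhatR ≤ objFGL Rhat lam rho Θ) :
    (1 / (8 * L ^ 2)) * ∑ k, frobSq (ΘhatR k - ΘR0 k)
      + lam * ∑ k, l1Norm (offDiagPart (ΘhatR k - ΘR0 k))
      ≤ 8 * lam ^ 2 * (∑ k, (sparsity (ΘR0 k) : ℝ)) / (1 / (8 * L ^ 2)) := by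
  classical
  have hL0 : (0:ℝ) < L := one_pos.trans_le hL
  have hL2 : (0:ℝ) < L^2 := pow_pos hL0 2
  set c : ℝ := 1 / (8 * L ^ 2) with hc_def
  have hc0 : (0:ℝ) < c := div_pos one_pos (by linarith)
  have hKR : (2:ℝ) ≤ (K:ℝ) := by exact_mod_cast hK
  have hlam2 : 2 * lam0 ≤ lam := by
    have hKn : (0:ℝ) ≤ (K:ℝ) * ((K:ℝ)-1) / 2 * rho :=
      mul_nonneg (div_nonneg (mul_nonneg (by linarith) (by linarith)) (by norm_num)) hrho
    linarith [hlam_low]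
  have hlampos : (0:ℝ) < lam := by linarith
  set Δf : Fin K → Matrix (Fin p) (Fin p) ℝ := fun k => ΘhatR k - ΘR0 k with hΔdef
  have hΔsym : ∀ k, (Δf k).IsHermitian := fun k => ((hΘhatR k).1.sub (hΘR0 k).1)
  choose μ hdet htr hlow hhigh hpos using fun k => key_lemma hL (hΘR0 k) (heig k) (hΔsym k)
  have hΘ1 : ∀ k, ΘR0 k + Δf k = ΘhatR k := fun k => by
    show ΘR0 k + (ΘhatR k - ΘR0 k) = ΘhatR k
    abel
  have hμm1 : ∀ k i, -1 < μ k i := fun k i => hpos k (by rw [hΘ1 k]; exact hΘhatR k) i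
  set F : Fin K → ℝ := fun k => frobSq (Δf k) with hFdef
  have hF0 : ∀ k, 0 ≤ F k :=
    fun k => Finset.sum_nonneg fun i _ => Finset.sum_nonneg fun j _ => sq_nonneg _
  set σ : Fin K → ℝ := fun k => ∑ i, (μ k i)^2 with hσdef
  have hσ0 : ∀ k, 0 ≤ σ k := fun k => Finset.sum_nonneg fun i _ => sq_nonneg _
  have hσhigh : ∀ k, σ k ≤ L^2 * F k := hhigh
  have hσlow : ∀ k, F k / L^2 ≤ σ k := hlow
  set Off : Finset (Fin p × Fin p) :=
    Finset.univ.filter (fun ij : Fin p × Fin p => ij.1 ≠ ij.2) with hOffdef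
  set Ssup : Fin K → Finset (Fin p × Fin p) :=
    fun k => Finset.univ.filter
      (fun ij : Fin p × Fin p => ij.1 ≠ ij.2 ∧ ΘR0 k ij.1 ij.2 ≠ 0) with hSsupdef
  have hSsub : ∀ k, Ssup k ⊆ Off := by
    intro k ij hij
    simp only [hSsupdef, hOffdef, Finset.mem_filter, Finset.mem_univ, true_and] at hij ⊢
    exact hij.1
  have hScard : ∀ k, ((Ssup k).card : ℝ) = (sparsity (ΘR0 k) : ℝ) := fun k => rfl
  set w : Fin K → ℝ := fun k => ∑ ij ∈ Ssup k, |Δf k ij.1 ij.2| with hwdef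
  set u : Fin K → ℝ := fun k => ∑ ij ∈ Off \ Ssup k, |Δf k ij.1 ij.2| with hudef
  have hw0 : ∀ k, 0 ≤ w k := fun k => Finset.sum_nonneg fun ij _ => abs_nonneg _
  have hu0 : ∀ k, 0 ≤ u k := fun k => Finset.sum_nonneg fun ij _ => abs_nonneg _
  have hwu : ∀ k, l1Norm (offDiagPart (Δf k)) = w k + u k := by
    intro k
    rw [l1off_eq, ← hOffdef, ← Finset.sum_sdiff (hSsub k)]
    rw [hwdef, hudef]
    ring
  have hK1 : 1 ≤ K := le_trans (by norm_num) hK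
  have hρK : rho * ((K:ℝ)-1) ≤ (lam - 2*lam0)/2 := by
    nlinarith [hlam_low, mul_nonneg (mul_nonneg hrho (by linarith : (0:ℝ) ≤ (K:ℝ)-1))
      (by linarith : (0:ℝ) ≤ (K:ℝ)-2)]
  have hΔji : ∀ k i j, Δf k j i = Δf k i j := by
    intro k i j
    conv_lhs => rw [← (hΔsym k).eq]
    simp [Matrix.conjTranspose_apply]
  have hOffsum : ∀ k, ∑ ij ∈ Off, |Δf k ij.1 ij.2| = w k + u k := by
    intro k
    rw [← Finset.sum_sdiff (hSsub k), hwdef, hudef]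
    ring
  have hZeroOff : ∀ k, ∀ ij ∈ Off \ Ssup k, ΘR0 k ij.1 ij.2 = 0 := by
    intro k ij hij
    rw [Finset.mem_sdiff] at hij
    obtain ⟨h1, h2⟩ := hij
    simp only [hOffdef, hSsupdef, Finset.mem_filter, Finset.mem_univ, true_and] at h1 h2
    by_contra h
    exact h2 ⟨h1, h⟩
  have master : ∀ t : ℝ, 0 < t → t ≤ 1 → (∀ k, t^2 * σ k ≤ 1/16) →
      c * t * (∑ k, F k) + (lam/2) * (∑ k, u k) ≤ (3*lam/2) * (∑ k, w k) := by
    intro t ht0 ht1 hsmall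
    set Θt : Fin K → Matrix (Fin p) (Fin p) ℝ := fun k => ΘR0 k + t • Δf k with hΘtdef
    have h1tμ : ∀ k i, 0 < 1 + t * μ k i := by
      intro k i
      nlinarith [hμm1 k i, mul_pos ht0 (show (0:ℝ) < 1 + μ k i by linarith [hμm1 k i])]
    have h1μ : ∀ k i, 0 < 1 + 1 * μ k i := by
      intro k i
      have := hμm1 k i
      linarith
    have hlogdet : ∀ (r:ℝ), (∀ k i, 0 < 1 + r * μ k i) → ∀ k,
        Real.log (ΘR0 k + r • Δf k).det
          = Real.log (ΘR0 k).det + ∑ i, Real.log (1 + r * μ k i) := by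
      intro r hr k
      rw [hdet k r]
      have hprod : (∏ i, (1 + r * μ k i)) ≠ 0 :=
        Finset.prod_ne_zero_iff.mpr (fun i _ => (hr k i).ne')
      rw [Real.log_mul (ne_of_gt (hΘR0 k).det_pos) hprod, Real.log_prod]
      intro i _
      exact (hr k i).ne'
    have htrace_t : ∀ (r : ℝ) k, Matrix.trace (Rhat k * (ΘR0 k + r • Δf k))
        = Matrix.trace (Rhat k * ΘR0 k) + r * Matrix.trace (Rhat k * Δf k) := by
      intro r k
      rw [Matrix.mul_add, Matrix.trace_add, Matrix.mul_smul, Matrix.trace_smul, smul_eq_mul]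
    have hΘ1' : ∀ k, ΘhatR k = ΘR0 k + (1:ℝ) • Δf k := by
      intro k
      rw [one_smul, hΘ1]
    -- entry formula
    have hent : ∀ k i j, Θt k i j = (1-t) * ΘR0 k i j + t * ΘhatR k i j := by
      intro k i j
      simp only [hΘtdef, Matrix.add_apply, Matrix.smul_apply, smul_eq_mul, hΔdef,
        Matrix.sub_apply]
      ring
    -- CONVEXITY
    have key1 : ∀ k, (Matrix.trace (Rhat k * Θt k) - Real.log (Θt k).det)
        ≤ (1-t) * (Matrix.trace (Rhat k * ΘR0 k) - Real.log (ΘR0 k).det)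
          + t * (Matrix.trace (Rhat k * ΘhatR k) - Real.log (ΘhatR k).det) := by
      intro k
      have e1 : Matrix.trace (Rhat k * Θt k)
          = Matrix.trace (Rhat k * ΘR0 k) + t * Matrix.trace (Rhat k * Δf k) := htrace_t t k
      have e2 : Real.log (Θt k).det
          = Real.log (ΘR0 k).det + ∑ i, Real.log (1+t*μ k i) := hlogdet t h1tμ k
      have e3 : Matrix.trace (Rhat k * ΘhatR k)
          = Matrix.trace (Rhat k * ΘR0 k) + 1 * Matrix.trace (Rhat k * Δf k) := by
        rw [hΘ1' k]; exact htrace_t 1 k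
      have e4 : Real.log (ΘhatR k).det
          = Real.log (ΘR0 k).det + ∑ i, Real.log (1+1*μ k i) := by
        rw [hΘ1' k]; exact hlogdet 1 h1μ k
      have e5 : t * (∑ i, Real.log (1+1*μ k i)) ≤ ∑ i, Real.log (1+t*μ k i) := by
        rw [Finset.mul_sum]
        refine Finset.sum_le_sum fun i _ => ?_
        rw [one_mul]
        exact log_concave_seg (hμm1 k i) ht0.le ht1
      calc Matrix.trace (Rhat k * Θt k) - Real.log (Θt k).det
          = (Matrix.trace (Rhat k * ΘR0 k) - Real.log (ΘR0 k).det)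
            + t * Matrix.trace (Rhat k * Δf k) - ∑ i, Real.log (1+t*μ k i) := by
            rw [e1, e2]; ring
        _ ≤ (Matrix.trace (Rhat k * ΘR0 k) - Real.log (ΘR0 k).det)
            + t * Matrix.trace (Rhat k * Δf k) - t * ∑ i, Real.log (1+1*μ k i) := by
            linarith [e5]
        _ = (1-t) * (Matrix.trace (Rhat k * ΘR0 k) - Real.log (ΘR0 k).det)
            + t * ((Matrix.trace (Rhat k * ΘR0 k) + 1 * Matrix.trace (Rhat k * Δf k))
              - (Real.log (ΘR0 k).det + ∑ i, Real.log (1+1*μ k i))) := by ring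
        _ = (1-t) * (Matrix.trace (Rhat k * ΘR0 k) - Real.log (ΘR0 k).det)
            + t * (Matrix.trace (Rhat k * ΘhatR k) - Real.log (ΘhatR k).det) := by
            rw [← e3, ← e4]
    have h_T1 : (∑ k, (Matrix.trace (Rhat k * Θt k) - Real.log (Θt k).det))
        ≤ (1-t) * (∑ k, (Matrix.trace (Rhat k * ΘR0 k) - Real.log (ΘR0 k).det))
          + t * (∑ k, (Matrix.trace (Rhat k * ΘhatR k) - Real.log (ΘhatR k).det)) := by
      rw [Finset.mul_sum, Finset.mul_sum, ← Finset.sum_add_distrib]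
      exact Finset.sum_le_sum fun k _ => key1 k
    have hentabs : ∀ (X Y : Matrix (Fin p) (Fin p) ℝ) (i j : Fin p),
        |(1-t) * X i j + t * Y i j| ≤ (1-t) * |X i j| + t * |Y i j| := by
      intro X Y i j
      calc |(1-t) * X i j + t * Y i j| ≤ |(1-t) * X i j| + |t * Y i j| := abs_add_le _ _
        _ = (1-t) * |X i j| + t * |Y i j| := by
            rw [abs_mul, abs_mul, abs_of_nonneg (by linarith : (0:ℝ) ≤ 1-t),
              abs_of_nonneg ht0.le]
    have h_T2 : (∑ k, l1Norm (offDiagPart (Θt k)))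
        ≤ (1-t) * (∑ k, l1Norm (offDiagPart (ΘR0 k)))
          + t * (∑ k, l1Norm (offDiagPart (ΘhatR k))) := by
      rw [Finset.mul_sum, Finset.mul_sum, ← Finset.sum_add_distrib]
      refine Finset.sum_le_sum fun k _ => ?_
      rw [l1off_eq, l1off_eq, l1off_eq, ← hOffdef, Finset.mul_sum, Finset.mul_sum,
        ← Finset.sum_add_distrib]
      refine Finset.sum_le_sum fun ij _ => ?_
      rw [hent k ij.1 ij.2]
      exact hentabs _ _ _ _
    have h_T3 : (∑ k, ∑ k', if k < k'
          then l1Norm (offDiagPart (Θt k) - offDiagPart (Θt k')) else 0)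
        ≤ (1-t) * (∑ k, ∑ k', if k < k'
            then l1Norm (offDiagPart (ΘR0 k) - offDiagPart (ΘR0 k')) else 0)
          + t * (∑ k, ∑ k', if k < k'
            then l1Norm (offDiagPart (ΘhatR k) - offDiagPart (ΘhatR k')) else 0) := by
      rw [Finset.mul_sum, Finset.mul_sum, ← Finset.sum_add_distrib]
      refine Finset.sum_le_sum fun k _ => ?_
      rw [Finset.mul_sum, Finset.mul_sum, ← Finset.sum_add_distrib]
      refine Finset.sum_le_sum fun k' _ => ?_
      by_cases hkk : k < k'
      · simp only [if_pos hkk]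
        rw [offDiagPart_sub, offDiagPart_sub, offDiagPart_sub, l1off_eq, l1off_eq, l1off_eq,
          ← hOffdef, Finset.mul_sum, Finset.mul_sum, ← Finset.sum_add_distrib]
        refine Finset.sum_le_sum fun ij _ => ?_
        have h1 : (Θt k - Θt k') ij.1 ij.2
            = (1-t) * (ΘR0 k - ΘR0 k') ij.1 ij.2 + t * (ΘhatR k - ΘhatR k') ij.1 ij.2 := by
          simp only [Matrix.sub_apply]
          rw [hent k ij.1 ij.2, hent k' ij.1 ij.2]
          ring
        rw [h1]
        exact hentabs _ _ _ _
      · simp only [if_neg hkk]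
        norm_num
    have hconv : objFGL Rhat lam rho Θt
        ≤ (1-t) * objFGL Rhat lam rho ΘR0 + t * objFGL Rhat lam rho ΘhatR := by
      have hA2 := mul_le_mul_of_nonneg_left h_T2 hlampos.le
      have hA3 := mul_le_mul_of_nonneg_left h_T3 hrho
      calc objFGL Rhat lam rho Θt
          = (∑ k, (Matrix.trace (Rhat k * Θt k) - Real.log (Θt k).det))
            + lam * (∑ k, l1Norm (offDiagPart (Θt k)))
            + rho * (∑ k, ∑ k', if k < k'
                then l1Norm (offDiagPart (Θt k) - offDiagPart (Θt k')) else 0) := rfl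
        _ ≤ ((1-t) * (∑ k, (Matrix.trace (Rhat k * ΘR0 k) - Real.log (ΘR0 k).det))
              + t * (∑ k, (Matrix.trace (Rhat k * ΘhatR k) - Real.log (ΘhatR k).det)))
            + lam * ((1-t) * (∑ k, l1Norm (offDiagPart (ΘR0 k)))
              + t * (∑ k, l1Norm (offDiagPart (ΘhatR k))))
            + rho * ((1-t) * (∑ k, ∑ k', if k < k'
                then l1Norm (offDiagPart (ΘR0 k) - offDiagPart (ΘR0 k')) else 0)
              + t * (∑ k, ∑ k', if k < k'
                then l1Norm (offDiagPart (ΘhatR k) - offDiagPart (ΘhatR k')) else 0)) :=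
            add_le_add (add_le_add h_T1 hA2) hA3
        _ = (1-t) * objFGL Rhat lam rho ΘR0 + t * objFGL Rhat lam rho ΘhatR := by
            simp only [objFGL]
            ring
    have hobj_t : objFGL Rhat lam rho Θt ≤ objFGL Rhat lam rho ΘR0 := by
      have h1 := hmin ΘR0 hΘR0
      have h2 : t * objFGL Rhat lam rho ΘhatR ≤ t * objFGL Rhat lam rho ΘR0 :=
        mul_le_mul_of_nonneg_left h1 ht0.le
      calc objFGL Rhat lam rho Θt
          ≤ (1-t) * objFGL Rhat lam rho ΘR0 + t * objFGL Rhat lam rho ΘhatR := hconv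
        _ ≤ (1-t) * objFGL Rhat lam rho ΘR0 + t * objFGL Rhat lam rho ΘR0 := by linarith
        _ = objFGL Rhat lam rho ΘR0 := by ring
    -- EXPANSION
    have hexp : (∑ k, (Matrix.trace (Rhat k * Θt k) - Real.log (Θt k).det))
        = (∑ k, (Matrix.trace (Rhat k * ΘR0 k) - Real.log (ΘR0 k).det))
          + t * (∑ k, Matrix.trace (Rhat k * Δf k))
          - (∑ k, ∑ i, Real.log (1 + t * μ k i)) := by
      have per : ∀ k, Matrix.trace (Rhat k * Θt k) - Real.log (Θt k).det
          = (Matrix.trace (Rhat k * ΘR0 k) - Real.log (ΘR0 k).det)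
            + t * Matrix.trace (Rhat k * Δf k) - ∑ i, Real.log (1 + t * μ k i) := by
        intro k
        rw [htrace_t t k, hlogdet t h1tμ k]
        ring
      rw [Finset.sum_congr rfl (fun k _ => per k), Finset.sum_sub_distrib,
        Finset.sum_add_distrib, Finset.mul_sum]
    have hstep2 : t * (∑ k, Matrix.trace (Rhat k * Δf k))
          - (∑ k, ∑ i, Real.log (1 + t * μ k i))
        ≤ lam * ((∑ k, l1Norm (offDiagPart (ΘR0 k))) - (∑ k, l1Norm (offDiagPart (Θt k))))
          + rho * ((∑ k, ∑ k', if k < k'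
              then l1Norm (offDiagPart (ΘR0 k) - offDiagPart (ΘR0 k')) else 0)
            - (∑ k, ∑ k', if k < k'
              then l1Norm (offDiagPart (Θt k) - offDiagPart (Θt k')) else 0)) := by
      have h1 : objFGL Rhat lam rho Θt
          = (∑ k, (Matrix.trace (Rhat k * Θt k) - Real.log (Θt k).det))
            + lam * (∑ k, l1Norm (offDiagPart (Θt k)))
            + rho * (∑ k, ∑ k', if k < k'
                then l1Norm (offDiagPart (Θt k) - offDiagPart (Θt k')) else 0) := rfl
      have h2 : objFGL Rhat lam rho ΘR0
          = (∑ k, (Matrix.trace (Rhat k * ΘR0 k) - Real.log (ΘR0 k).det))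
            + lam * (∑ k, l1Norm (offDiagPart (ΘR0 k)))
            + rho * (∑ k, ∑ k', if k < k'
                then l1Norm (offDiagPart (ΘR0 k) - offDiagPart (ΘR0 k')) else 0) := rfl
      have h3 := hobj_t
      rw [h1, h2, hexp] at h3
      linarith
    -- LOWER BOUNDS
    have hPbound : (∑ k, ∑ i, Real.log (1 + t * μ k i))
        ≤ t * (∑ k, Matrix.trace ((ΘR0 k)⁻¹ * Δf k)) - (t^2/8) * (∑ k, σ k) := by
      have per : ∀ k, (∑ i, Real.log (1 + t * μ k i))
          ≤ t * Matrix.trace ((ΘR0 k)⁻¹ * Δf k) - (t^2/8) * σ k := by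
        intro k
        have h1 : ∀ i, Real.log (1 + t * μ k i) ≤ t * μ k i - (t * μ k i)^2/8 := by
          intro i
          apply log_quad
          have h2 : (t * μ k i)^2 ≤ 1/16 := by
            have h3 : (μ k i)^2 ≤ σ k :=
              Finset.single_le_sum (f := fun i => (μ k i)^2)
                (fun i _ => sq_nonneg _) (Finset.mem_univ i)
            calc (t * μ k i)^2 = t^2 * (μ k i)^2 := by ring
              _ ≤ t^2 * σ k := mul_le_mul_of_nonneg_left h3 (sq_nonneg t)
              _ ≤ 1/16 := hsmall k
          rw [← Real.sqrt_sq_eq_abs]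
          calc Real.sqrt ((t * μ k i)^2) ≤ Real.sqrt (1/16) := Real.sqrt_le_sqrt h2
            _ = 1/4 := by
                rw [show (1:ℝ)/16 = (1/4)^2 by norm_num, Real.sqrt_sq (by norm_num)]
        calc (∑ i, Real.log (1 + t * μ k i)) ≤ ∑ i, (t * μ k i - (t * μ k i)^2/8) :=
              Finset.sum_le_sum fun i _ => h1 i
          _ = t * (∑ i, μ k i) - (t^2/8) * (∑ i, (μ k i)^2) := by
              rw [Finset.sum_sub_distrib, Finset.mul_sum, Finset.mul_sum]
              congr 1
              exact Finset.sum_congr rfl fun i _ => by ring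
          _ = t * Matrix.trace ((ΘR0 k)⁻¹ * Δf k) - (t^2/8) * σ k := by
              rw [htr k, hσdef]
      calc (∑ k, ∑ i, Real.log (1 + t * μ k i))
          ≤ ∑ k, (t * Matrix.trace ((ΘR0 k)⁻¹ * Δf k) - (t^2/8) * σ k) :=
            Finset.sum_le_sum fun k _ => per k
        _ = t * (∑ k, Matrix.trace ((ΘR0 k)⁻¹ * Δf k)) - (t^2/8) * (∑ k, σ k) := by
            rw [Finset.sum_sub_distrib, Finset.mul_sum, Finset.mul_sum]
    have htrdiff : ∀ k, |Matrix.trace (Rhat k * Δf k)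
        - Matrix.trace ((ΘR0 k)⁻¹ * Δf k)| ≤ lam0 * (w k + u k) := by
      intro k
      have hE : Matrix.trace (Rhat k * Δf k) - Matrix.trace ((ΘR0 k)⁻¹ * Δf k)
          = Matrix.trace ((Rhat k - (ΘR0 k)⁻¹) * Δf k) := by
        rw [Matrix.sub_mul, Matrix.trace_sub]
      rw [hE]
      have htrentry : Matrix.trace ((Rhat k - (ΘR0 k)⁻¹) * Δf k)
          = ∑ ij : Fin p × Fin p, (Rhat k - (ΘR0 k)⁻¹) ij.1 ij.2 * Δf k ij.2 ij.1 := by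
        rw [Fintype.sum_prod_type
          (f := fun ij : Fin p × Fin p => (Rhat k - (ΘR0 k)⁻¹) ij.1 ij.2 * Δf k ij.2 ij.1)]
        simp [Matrix.trace, Matrix.diag, Matrix.mul_apply]
      rw [htrentry]
      calc |∑ ij : Fin p × Fin p, (Rhat k - (ΘR0 k)⁻¹) ij.1 ij.2 * Δf k ij.2 ij.1|
          ≤ ∑ ij : Fin p × Fin p, |(Rhat k - (ΘR0 k)⁻¹) ij.1 ij.2 * Δf k ij.2 ij.1| :=
            Finset.abs_sum_le_sum_abs _ _
        _ = ∑ ij ∈ Off, |(Rhat k - (ΘR0 k)⁻¹) ij.1 ij.2 * Δf k ij.2 ij.1| := by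
            rw [← Finset.sum_filter_add_sum_filter_not Finset.univ
              (fun ij : Fin p × Fin p => ij.1 ≠ ij.2), ← hOffdef]
            have hzero : ∑ ij ∈ Finset.univ.filter
                (fun ij : Fin p × Fin p => ¬(ij.1 ≠ ij.2)),
                |(Rhat k - (ΘR0 k)⁻¹) ij.1 ij.2 * Δf k ij.2 ij.1| = 0 := by
              apply Finset.sum_eq_zero
              intro ij hij
              simp only [Finset.mem_filter, Finset.mem_univ, true_and, not_not] at hij
              have : (Rhat k - (ΘR0 k)⁻¹) ij.1 ij.2 = 0 := by
                rw [hij, Matrix.sub_apply, hRdiag k ij.2, hR0diag k ij.2]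
                ring
              rw [this, zero_mul, abs_zero]
            rw [hzero, add_zero]
        _ ≤ ∑ ij ∈ Off, lam0 * |Δf k ij.1 ij.2| := by
            refine Finset.sum_le_sum fun ij _ => ?_
            rw [abs_mul, hΔji k ij.1 ij.2]
            exact mul_le_mul_of_nonneg_right
              ((abs_le_supNorm _ _ _).trans (hclose k)) (abs_nonneg _)
        _ = lam0 * (w k + u k) := by rw [← Finset.mul_sum, hOffsum k]
    have hBsum : (∑ k, Matrix.trace ((ΘR0 k)⁻¹ * Δf k))
        ≤ (∑ k, Matrix.trace (Rhat k * Δf k)) + lam0 * ((∑ k, w k) + (∑ k, u k)) := by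
      have h1 : ∀ k, Matrix.trace ((ΘR0 k)⁻¹ * Δf k)
          ≤ Matrix.trace (Rhat k * Δf k) + lam0 * (w k + u k) := by
        intro k
        have := (abs_le.mp (htrdiff k)).1
        linarith
      calc (∑ k, Matrix.trace ((ΘR0 k)⁻¹ * Δf k))
          ≤ ∑ k, (Matrix.trace (Rhat k * Δf k) + lam0 * (w k + u k)) :=
            Finset.sum_le_sum fun k _ => h1 k
        _ = (∑ k, Matrix.trace (Rhat k * Δf k)) + lam0 * ((∑ k, w k) + (∑ k, u k)) := by
            rw [Finset.sum_add_distrib, ← Finset.mul_sum, Finset.sum_add_distrib]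
    have hl1diff : lam * ((∑ k, l1Norm (offDiagPart (ΘR0 k)))
          - (∑ k, l1Norm (offDiagPart (Θt k))))
        ≤ lam * (t * (∑ k, w k) - t * (∑ k, u k)) := by
      apply mul_le_mul_of_nonneg_left _ hlampos.le
      have per : ∀ k, l1Norm (offDiagPart (ΘR0 k)) - l1Norm (offDiagPart (Θt k))
          ≤ t * w k - t * u k := by
        intro k
        rw [l1off_eq (ΘR0 k), l1off_eq (Θt k), ← hOffdef,
          ← Finset.sum_sdiff (hSsub k), ← Finset.sum_sdiff (hSsub k)]
        have hz1 : ∑ ij ∈ Off \ Ssup k, |ΘR0 k ij.1 ij.2| = 0 :=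
          Finset.sum_eq_zero fun ij hij => by rw [hZeroOff k ij hij, abs_zero]
        have hz2 : ∑ ij ∈ Off \ Ssup k, |Θt k ij.1 ij.2| = t * u k := by
          rw [hudef, Finset.mul_sum]
          refine Finset.sum_congr rfl fun ij hij => ?_
          have h3 : Θt k ij.1 ij.2 = t * Δf k ij.1 ij.2 := by
            simp only [hΘtdef, Matrix.add_apply, Matrix.smul_apply, smul_eq_mul]
            rw [hZeroOff k ij hij]
            ring
          rw [h3, abs_mul, abs_of_nonneg ht0.le]
        have hz3 : (∑ ij ∈ Ssup k, |ΘR0 k ij.1 ij.2|)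
            - (∑ ij ∈ Ssup k, |Θt k ij.1 ij.2|) ≤ t * w k := by
          rw [hwdef, Finset.mul_sum, ← Finset.sum_sub_distrib]
          refine Finset.sum_le_sum fun ij _ => ?_
          have h4 : ΘR0 k ij.1 ij.2 - Θt k ij.1 ij.2 = -(t * Δf k ij.1 ij.2) := by
            simp only [hΘtdef, Matrix.add_apply, Matrix.smul_apply, smul_eq_mul]
            ring
          calc |ΘR0 k ij.1 ij.2| - |Θt k ij.1 ij.2|
              ≤ |ΘR0 k ij.1 ij.2 - Θt k ij.1 ij.2| := abs_sub_abs_le_abs_sub _ _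
            _ = t * |Δf k ij.1 ij.2| := by rw [h4, abs_neg, abs_mul, abs_of_nonneg ht0.le]
        linarith
      have h5 := Finset.sum_le_sum (fun k (_ : k ∈ Finset.univ) => per k)
      rw [Finset.sum_sub_distrib] at h5
      calc (∑ k, l1Norm (offDiagPart (ΘR0 k))) - (∑ k, l1Norm (offDiagPart (Θt k)))
          = ∑ k, (l1Norm (offDiagPart (ΘR0 k)) - l1Norm (offDiagPart (Θt k))) := by
            rw [Finset.sum_sub_distrib]
        _ ≤ ∑ k, (t * w k - t * u k) := Finset.sum_le_sum fun k _ => per k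
        _ = t * (∑ k, w k) - t * (∑ k, u k) := by
            rw [Finset.sum_sub_distrib, Finset.mul_sum, Finset.mul_sum]
    have hQdiff : rho * ((∑ k, ∑ k', if k < k'
            then l1Norm (offDiagPart (ΘR0 k) - offDiagPart (ΘR0 k')) else 0)
          - (∑ k, ∑ k', if k < k'
            then l1Norm (offDiagPart (Θt k) - offDiagPart (Θt k')) else 0))
        ≤ t * ((lam - 2*lam0)/2) * ((∑ k, w k) + (∑ k, u k)) := by
      have hpair : ∀ k k', l1Norm (offDiagPart (ΘR0 k) - offDiagPart (ΘR0 k'))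
            - l1Norm (offDiagPart (Θt k) - offDiagPart (Θt k'))
          ≤ t * ((w k + u k) + (w k' + u k')) := by
        intro k k'
        rw [offDiagPart_sub, offDiagPart_sub, l1off_eq, l1off_eq, ← hOffdef]
        rw [← hOffsum k, ← hOffsum k', ← Finset.sum_add_distrib, Finset.mul_sum,
          ← Finset.sum_sub_distrib]
        refine Finset.sum_le_sum fun ij _ => ?_
        have h1 : (ΘR0 k - ΘR0 k') ij.1 ij.2 - (Θt k - Θt k') ij.1 ij.2
            = -(t * (Δf k ij.1 ij.2 - Δf k' ij.1 ij.2)) := by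
          simp only [hΘtdef, Matrix.sub_apply, Matrix.add_apply, Matrix.smul_apply,
            smul_eq_mul]
          ring
        calc |(ΘR0 k - ΘR0 k') ij.1 ij.2| - |(Θt k - Θt k') ij.1 ij.2|
            ≤ |(ΘR0 k - ΘR0 k') ij.1 ij.2 - (Θt k - Θt k') ij.1 ij.2| :=
              abs_sub_abs_le_abs_sub _ _
          _ = t * |Δf k ij.1 ij.2 - Δf k' ij.1 ij.2| := by
              rw [h1, abs_neg, abs_mul, abs_of_nonneg ht0.le]
          _ ≤ t * (|Δf k ij.1 ij.2| + |Δf k' ij.1 ij.2|) :=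
              mul_le_mul_of_nonneg_left (abs_sub _ _) ht0.le
      have hdiff_sum : (∑ k, ∑ k', if k < k'
            then l1Norm (offDiagPart (ΘR0 k) - offDiagPart (ΘR0 k')) else 0)
          - (∑ k, ∑ k', if k < k'
            then l1Norm (offDiagPart (Θt k) - offDiagPart (Θt k')) else 0)
          ≤ t * (((K:ℝ) - 1) * ∑ k, (w k + u k)) := by
        rw [← Finset.sum_sub_distrib]
        have h2 : ∀ k, (∑ k', if k < k'
              then l1Norm (offDiagPart (ΘR0 k) - offDiagPart (ΘR0 k')) else 0)
            - (∑ k', if k < k'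
              then l1Norm (offDiagPart (Θt k) - offDiagPart (Θt k')) else 0)
            ≤ ∑ k', if k < k' then t * ((w k + u k) + (w k' + u k')) else 0 := by
          intro k
          rw [← Finset.sum_sub_distrib]
          refine Finset.sum_le_sum fun k' _ => ?_
          by_cases hkk : k < k'
          · simp only [if_pos hkk]
            exact hpair k k'
          · simp only [if_neg hkk]
            norm_num
        calc (∑ k, ((∑ k', if k < k'
              then l1Norm (offDiagPart (ΘR0 k) - offDiagPart (ΘR0 k')) else 0)
            - (∑ k', if k < k'
              then l1Norm (offDiagPart (Θt k) - offDiagPart (Θt k')) else 0)))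
            ≤ ∑ k, ∑ k', if k < k' then t * ((w k + u k) + (w k' + u k')) else 0 :=
              Finset.sum_le_sum fun k _ => h2 k
          _ = t * ∑ k, ∑ k', if k < k' then ((w k + u k) + (w k' + u k')) else 0 := by
              rw [Finset.mul_sum]
              refine Finset.sum_congr rfl fun k _ => ?_
              rw [Finset.mul_sum]
              refine Finset.sum_congr rfl fun k' _ => ?_
              by_cases hkk : k < k' <;> simp [hkk]
          _ = t * (((K:ℝ) - 1) * ∑ k, (w k + u k)) := by
              rw [pair_sum hK1 (fun k => w k + u k)]
      have hsum_a_nonneg : 0 ≤ ∑ k, (w k + u k) :=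
        Finset.sum_nonneg fun k _ => add_nonneg (hw0 k) (hu0 k)
      have h3 : rho * ((∑ k, ∑ k', if k < k'
            then l1Norm (offDiagPart (ΘR0 k) - offDiagPart (ΘR0 k')) else 0)
          - (∑ k, ∑ k', if k < k'
            then l1Norm (offDiagPart (Θt k) - offDiagPart (Θt k')) else 0))
          ≤ rho * (t * (((K:ℝ) - 1) * ∑ k, (w k + u k))) :=
        mul_le_mul_of_nonneg_left hdiff_sum hrho
      calc rho * ((∑ k, ∑ k', if k < k'
            then l1Norm (offDiagPart (ΘR0 k) - offDiagPart (ΘR0 k')) else 0)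
          - (∑ k, ∑ k', if k < k'
            then l1Norm (offDiagPart (Θt k) - offDiagPart (Θt k')) else 0))
          ≤ rho * (t * (((K:ℝ) - 1) * ∑ k, (w k + u k))) := h3
        _ = t * (rho * ((K:ℝ) - 1)) * (∑ k, (w k + u k)) := by ring
        _ ≤ t * ((lam - 2*lam0)/2) * (∑ k, (w k + u k)) := by
            apply mul_le_mul_of_nonneg_right _ hsum_a_nonneg
            apply mul_le_mul_of_nonneg_left hρK ht0.le
        _ = t * ((lam - 2*lam0)/2) * ((∑ k, w k) + (∑ k, u k)) := by
            rw [Finset.sum_add_distrib]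
    -- frobenius lower bound for sigma
    have h15 : c * t^2 * (∑ k, F k) ≤ (t^2/8) * (∑ k, σ k) := by
      have h1 : (∑ k, F k) / L^2 ≤ ∑ k, σ k := by
        rw [Finset.sum_div]
        exact Finset.sum_le_sum fun k _ => hσlow k
      have h2 : c * t^2 * (∑ k, F k) = (t^2/8) * ((∑ k, F k) / L^2) := by
        rw [hc_def]
        field_simp
      rw [h2]
      exact mul_le_mul_of_nonneg_left h1 (by positivity)
    -- ASSEMBLE
    have h14t : t * (∑ k, Matrix.trace ((ΘR0 k)⁻¹ * Δf k))
        ≤ t * ((∑ k, Matrix.trace (Rhat k * Δf k)) + lam0 * ((∑ k, w k) + (∑ k, u k))) :=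
      mul_le_mul_of_nonneg_left hBsum ht0.le
    have hfin1 : t * (c * t * (∑ k, F k) + (lam/2) * (∑ k, u k))
        ≤ t * ((3*lam/2) * (∑ k, w k)) := by
      nlinarith [hstep2, hl1diff, hQdiff, hPbound, h14t, h15]
    exact le_of_mul_le_mul_left hfin1 ht0
  -- Cauchy-Schwarz
  set s : ℝ := ∑ k, (sparsity (ΘR0 k) : ℝ) with hsdef
  have hs0 : (0:ℝ) ≤ s := Finset.sum_nonneg fun k _ => Nat.cast_nonneg _
  set y : ℝ := Real.sqrt (∑ k, F k) with hydef
  have hy0 : 0 ≤ y := Real.sqrt_nonneg _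
  have hy2 : y^2 = ∑ k, F k := Real.sq_sqrt (Finset.sum_nonneg fun k _ => hF0 k)
  have hws : (∑ k, w k) ≤ Real.sqrt s * y := by
    have h1 : ∀ k, w k ≤ Real.sqrt ((sparsity (ΘR0 k) : ℝ)) * Real.sqrt (F k) := by
      intro k
      have h2 : w k = ∑ ij ∈ Ssup k, 1 * |Δf k ij.1 ij.2| := by
        rw [hwdef]; exact Finset.sum_congr rfl fun ij _ => (one_mul _).symm
      rw [h2]
      have h3 := Real.sum_mul_le_sqrt_mul_sqrt (Ssup k) (fun _ => (1:ℝ))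
        (fun ij => |Δf k ij.1 ij.2|)
      have h4 : (∑ _ij ∈ Ssup k, (1:ℝ)^2) = ((Ssup k).card : ℝ) := by simp
      have h5 : ∑ ij ∈ Ssup k, |Δf k ij.1 ij.2|^2 ≤ F k := by
        have h6 : ∑ ij ∈ Ssup k, |Δf k ij.1 ij.2|^2
            = ∑ ij ∈ Ssup k, (Δf k ij.1 ij.2)^2 := by
          exact Finset.sum_congr rfl fun ij _ => sq_abs _
        rw [h6]
        have h7 : F k = ∑ ij : Fin p × Fin p, (Δf k ij.1 ij.2)^2 := by
          show frobSq (Δf k) = _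
          rw [Fintype.sum_prod_type (f := fun ij : Fin p × Fin p => (Δf k ij.1 ij.2)^2)]
          rfl
        rw [h7]
        exact Finset.sum_le_sum_of_subset_of_nonneg (Finset.subset_univ _)
          (fun ij _ _ => sq_nonneg _)
      calc ∑ ij ∈ Ssup k, 1 * |Δf k ij.1 ij.2|
          ≤ Real.sqrt (∑ _ij ∈ Ssup k, (1:ℝ)^2)
            * Real.sqrt (∑ ij ∈ Ssup k, |Δf k ij.1 ij.2|^2) := h3
        _ ≤ Real.sqrt ((sparsity (ΘR0 k) : ℝ)) * Real.sqrt (F k) := by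
            rw [h4, hScard k]
            exact mul_le_mul_of_nonneg_left (Real.sqrt_le_sqrt h5) (Real.sqrt_nonneg _)
    calc ∑ k, w k ≤ ∑ k, Real.sqrt ((sparsity (ΘR0 k) : ℝ)) * Real.sqrt (F k) :=
          Finset.sum_le_sum fun k _ => h1 k
      _ ≤ Real.sqrt (∑ k, (sparsity (ΘR0 k) : ℝ)) * Real.sqrt (∑ k, F k) :=
          Real.sum_sqrt_mul_sqrt_le _ (fun k => Nat.cast_nonneg _) (fun k => hF0 k)
      _ = Real.sqrt s * y := by rw [hsdef, hydef]
  -- key scalar bound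
  have hlamsqs : lam * Real.sqrt s ≤ c / (16 * L) := by
    have hterm2 : 0 ≤ 2 * (K : ℝ) * (p : ℝ) * lam0 ^ 2 / c := by positivity
    have h1 : 8 * lam ^ 2 * s / c ≤ lam0 / (2 * L) := by
      rw [hsdef]; linarith [hsparse, hterm2]
    have h2 : 8 * lam ^ 2 * s / c ≤ lam / (4 * L) := by
      calc 8 * lam ^ 2 * s / c ≤ lam0 / (2*L) := h1
        _ ≤ lam / (4 * L) := by
            rw [div_le_div_iff₀ (by linarith) (by linarith)]
            nlinarith
    have h3 : lam^2 * s ≤ c^2 / (256 * L^2) := by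
      have h4 : lam^2 * s ≤ c * lam / (32 * L) := by
        rw [div_le_div_iff₀ (by linarith : (0:ℝ) < c) (by linarith : (0:ℝ) < 4*L)] at h2
        rw [le_div_iff₀ (by linarith : (0:ℝ) < 32*L)]
        linarith
      have h5 : lam ≤ c / (8*L) := hlam_high
      calc lam^2 * s ≤ c * lam / (32*L) := h4
        _ ≤ c * (c/(8*L)) / (32*L) := by
            apply div_le_div_of_nonneg_right ?_ (by linarith)
            · exact mul_le_mul_of_nonneg_left h5 hc0.le
        _ = c^2 / (256 * L^2) := by field_simp; ring
    have h6 : (lam * Real.sqrt s)^2 ≤ (c/(16*L))^2 := by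
      have : (lam * Real.sqrt s)^2 = lam^2 * s := by
        rw [mul_pow, Real.sq_sqrt hs0]
      rw [this]
      calc lam^2 * s ≤ c^2/(256*L^2) := h3
        _ = (c/(16*L))^2 := by field_simp; ring
    have h7 : 0 ≤ lam * Real.sqrt s := mul_nonneg hlampos.le (Real.sqrt_nonneg _)
    have h8 : 0 ≤ c/(16*L) := by positivity
    nlinarith
  -- localization
  have hmain : c * (∑ k, F k) + (lam/2) * (∑ k, u k) ≤ (3*lam/2) * (∑ k, w k) := by
    set X : ℝ := ∑ k, σ k with hXdef
    have hX0 : 0 ≤ X := Finset.sum_nonneg fun k _ => hσ0 k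
    by_cases hX : X ≤ 1/16
    · have h1 := master 1 one_pos le_rfl (fun k => by
        have : σ k ≤ X := Finset.single_le_sum (fun k _ => hσ0 k) (Finset.mem_univ k)
        nlinarith)
      simpa using h1
    · exfalso
      push_neg at hX
      set rx : ℝ := Real.sqrt X with hrxdef
      have hrx : 1/4 < rx := by
        have : Real.sqrt (1/16) < Real.sqrt X := Real.sqrt_lt_sqrt (by norm_num) hX
        rwa [show (1:ℝ)/16 = (1/4)^2 by norm_num, Real.sqrt_sq (by norm_num)] at this
      have hrx2 : rx^2 = X := Real.sq_sqrt hX0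
      set t : ℝ := (1/4) / rx with htdef
      have ht0 : 0 < t := by positivity
      have ht1 : t ≤ 1 := by
        rw [htdef, div_le_one (by linarith)]
        linarith
      have hsmall : ∀ k, t^2 * σ k ≤ 1/16 := by
        intro k
        have h1 : σ k ≤ X := Finset.single_le_sum (fun k _ => hσ0 k) (Finset.mem_univ k)
        have h2 : t^2 = (1/16) / X := by
          rw [htdef, div_pow, hrx2]; norm_num
        rw [h2]
        rw [div_mul_eq_mul_div, div_le_iff₀ (by linarith : (0:ℝ) < X)]
        nlinarith
      have h1 := master t ht0 ht1 hsmall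
      -- drop the u-term
      have h2 : c * t * (∑ k, F k) ≤ (3*lam/2) * (∑ k, w k) := by
        have : 0 ≤ (lam/2) * (∑ k, u k) :=
          mul_nonneg (by linarith) (Finset.sum_nonneg fun k _ => hu0 k)
        linarith
      have h3 : (∑ k, w k) ≤ Real.sqrt s * y := hws
      have hXF : X ≤ L^2 * (∑ k, F k) := by
        calc X = ∑ k, σ k := rfl
          _ ≤ ∑ k, L^2 * F k := Finset.sum_le_sum fun k _ => hσhigh k
          _ = L^2 * ∑ k, F k := by rw [Finset.mul_sum]
      have hyrx : rx ≤ L * y := by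
        have h4 : rx^2 ≤ (L*y)^2 := by
          rw [hrx2, mul_pow, hy2]; exact hXF
        have h5 : 0 ≤ L * y := mul_nonneg hL0.le hy0
        nlinarith [Real.sqrt_nonneg X]
      -- c * t * ΣF ≥ c * y / (4L) ... derive contradiction
      have hty : c * t * (∑ k, F k) = c * (1/4) * y^2 / rx := by
        rw [htdef, hy2]; ring
      have h6 : c * (1/4) * y^2 / rx ≤ (3*lam/2) * (Real.sqrt s * y) := by
        rw [← hty]
        calc c * t * (∑ k, F k) ≤ (3*lam/2) * (∑ k, w k) := h2
          _ ≤ (3*lam/2) * (Real.sqrt s * y) := by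
              apply mul_le_mul_of_nonneg_left h3 (by linarith)
      have h7 : c * (1/4) * y^2 ≤ (3*lam/2) * Real.sqrt s * y * rx := by
        rw [div_le_iff₀ (by linarith : (0:ℝ) < rx)] at h6
        linarith [h6]
      have h8 : (3*lam/2) * Real.sqrt s ≤ (3/2) * (c/(16*L)) := by
        nlinarith [hlamsqs]
      have hrx0 : (0:ℝ) < rx := by linarith
      have hy_pos : 0 < y := by
        by_contra hy
        push_neg at hy
        have : y = 0 := le_antisymm hy hy0
        rw [this] at hyrx
        simp at hyrx
        linarith
      -- rx ≤ L y, so RHS ≤ (3c/(32L)) y (L y) = 3c y² /32; LHS = c y²/4. contradiction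
      have h9 : (3*lam/2) * Real.sqrt s * y * rx ≤ (3/2)*(c/(16*L)) * y * (L*y) := by
        have ha : 0 ≤ (3*lam/2) * Real.sqrt s * y :=
          mul_nonneg (mul_nonneg (by linarith) (Real.sqrt_nonneg _)) hy0
        have hb := mul_le_mul_of_nonneg_left hyrx ha
        have hcmp : (3*lam/2) * Real.sqrt s * y ≤ (3/2)*(c/(16*L)) * y :=
          mul_le_mul_of_nonneg_right h8 hy0
        calc (3*lam/2) * Real.sqrt s * y * rx ≤ (3*lam/2) * Real.sqrt s * y * (L*y) := hb
          _ ≤ (3/2)*(c/(16*L)) * y * (L*y) := by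
              apply mul_le_mul_of_nonneg_right hcmp
              exact mul_nonneg hL0.le hy0
      have h10 : (3/2)*(c/(16*L)) * y * (L*y) = (3/32) * c * y^2 := by
        field_simp
        ring
      nlinarith [sq_nonneg y, mul_pos hy_pos hy_pos]
  -- final algebra
  have hgoal2 : lam * ∑ k, l1Norm (offDiagPart (Δf k)) = lam * ((∑ k, w k) + (∑ k, u k)) := by
    rw [← Finset.sum_add_distrib]
    congr 1
    exact Finset.sum_congr rfl fun k _ => hwu k
  rw [hgoal2]
  have hWy : (∑ k, w k) ≤ Real.sqrt s * y := hws
  have hU0 : 0 ≤ ∑ k, u k := Finset.sum_nonneg fun k _ => hu0 k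
  have hW0 : 0 ≤ ∑ k, w k := Finset.sum_nonneg fun k _ => hw0 k
  have hss : (Real.sqrt s)^2 = s := Real.sq_sqrt hs0
  have hfinal : c * (∑ k, F k) + lam * ((∑ k, w k) + (∑ k, u k)) ≤ 4*lam*(Real.sqrt s * y) - c * y^2 := by
    rw [hy2]
    nlinarith [hmain, hWy, hlampos]
  calc c * (∑ k, F k) + lam * ((∑ k, w k) + (∑ k, u k))
      ≤ 4*lam*(Real.sqrt s * y) - c * y^2 := hfinal
    _ ≤ 8 * lam^2 * s / c := by
        rw [le_div_iff₀ hc0]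
        nlinarith [sq_nonneg (c * y - 2 * lam * Real.sqrt s), hss, hc0,
          sq_nonneg (lam * Real.sqrt s), mul_nonneg (mul_nonneg hlampos.le hlampos.le) hs0]
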